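/- Let (X,d,μ) be upper doubling with dominating function λ and constant C_λ, K a Calderón–Zygmund kernel with constant C_K and Dini modulus ω, and D a David–Mattila lattice with parameters C_0, A_0. Suppose the maximal truncation T^♯f(x) := sup_{ε>0} |∫_{d(x,y)>ε} K(x,y) f(y) dμ(y)| satisfies the weak type (1,1) bound μ{T^♯f > t} ≤ C_W·‖f‖_{L¹(μ)}/t. Then the operators N_{Q₀}f(x) := 1_{Q₀}(x)·sup over cells P ∈ D with x ∈ P ⊂ Q₀ of sup_{y∈P} |∫_{X∖30B(P)} K(y,z) f(z) dμ(z)| satisfy a uniform weak type (1,1) bound: there is a constant C depending only on C_W, C_K, ‖ω‖_Dini, C_λ, C_0, A_0, but not on Q₀, such that μ{x : N_{Q₀}f(x) > t} ≤ C·‖f‖_{L¹(μ)}/t for every cell Q₀ ∈ D, every t > 0, and every integrable f supported on 30B(Q₀). -/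

import Mathlib

open MeasureTheory Metric Set ENNReal

noncomputable section

variable {X : Type*} [MetricSpace X] [MeasurableSpace X] [BorelSpace X]

/-- The support of a measure on a metric space: points all of whose balls have
positive measure. -/
def msupport (μ : Measure X) : Set X := {x | ∀ r : ℝ, 0 < r → 0 < μ (ball x r)}

/-- `(X, d, μ)` is upper doubling with dominating function `lam` and constant `Cl`. -/
structure IsUpperDoubling (μ : Measure X) (lam : X → ℝ → ℝ) (Cl : ℝ) : Prop where
  one_lt : 1 < Cl
  lam_pos : ∀ x r, 0 < r → 0 < lam x r
  lam_mono : ∀ x r₁ r₂, 0 < r₁ → r₁ ≤ r₂ → lam x r₁ ≤ lam x r₂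
  measure_le : ∀ x r, 0 < r → μ (ball x r) ≤ ENNReal.ofReal (lam x r)
  halving : ∀ x r, 0 < r → lam x r ≤ Cl * lam x (r / 2)
  close : ∀ x y r, 0 < r → dist x y ≤ r → lam x r ≤ Cl * lam y r

/-- `(X, d)` is geometrically doubling with constant `C` and doubling dimension `n`:
every `r`-separated subset of a ball of radius `R ≥ r` has cardinality at most `C (R/r)^n`. -/
def GeometricallyDoubling (X : Type*) [MetricSpace X] (C : ℝ) (n : ℕ) : Prop :=
  ∀ (x : X) (R r : ℝ), 0 < r → r ≤ R →
    ∀ S : Finset X, (↑S : Set X) ⊆ ball x R →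
      (∀ a ∈ S, ∀ b ∈ S, a ≠ b → r ≤ dist a b) → (S.card : ℝ) ≤ C * (R / r) ^ n

/-- `ω` is a Dini modulus of continuity. -/
structure IsDiniModulus (ω : ℝ → ℝ) : Prop where
  nonneg : ∀ t, 0 ≤ t → 0 ≤ ω t
  mono : MonotoneOn ω (Set.Ici 0)
  subadd : ∀ s t, 0 ≤ s → 0 ≤ t → ω (s + t) ≤ ω s + ω t
  zero : ω 0 = 0
  pos : ∀ t, 0 < t → 0 < ω t
  summable : Summable (fun j : ℕ => ω ((2 : ℝ) ^ (-(j : ℤ))))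

/-- The Dini norm `∑_{j ≥ 0} ω(2^{-j})`. -/
def diniNorm (ω : ℝ → ℝ) : ℝ := ∑' j : ℕ, ω ((2 : ℝ) ^ (-(j : ℤ)))

/-- `K` is a Calderón–Zygmund kernel with size constant `CK` and modulus of continuity `ω`,
relative to the dominating function `lam`. -/
structure IsCZKernel (lam : X → ℝ → ℝ) (K : X → X → ℂ) (CK : ℝ) (ω : ℝ → ℝ) : Prop where
  size : ∀ x y, x ≠ y → ‖K x y‖ ≤ CK / lam x (dist x y)
  smooth : ∀ x x' y, x ≠ y → dist x x' < dist x y / 2 →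
    ‖K x y - K x' y‖ + ‖K y x - K y x'‖ ≤ ω (dist x x' / dist x y) / lam x (dist x y)

/-- The maximal truncation `T^♯ f(x) = sup_{ε > 0} |∫_{d(x,y) > ε} K(x,y) f(y) dμ(y)|`,
valued in `ℝ≥0∞`. -/
noncomputable def Tsharp (μ : Measure X) (K : X → X → ℂ) (f : X → ℂ) (x : X) : ℝ≥0∞ :=
  ⨆ (ε : ℝ) (_ : 0 < ε), ENNReal.ofReal ‖∫ y in (closedBall x ε)ᶜ, K x y * f y ∂μ‖

/-- `T` is an `L²(μ)`-bounded Calderón–Zygmund operator with kernel `K` and `L²` norm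
bound `CT`. -/
structure IsCZOperator (μ : Measure X) (K : X → X → ℂ) (T : (X → ℂ) → X → ℂ) (CT : ℝ) :
    Prop where
  map_add : ∀ f g, MemLp f 2 μ → MemLp g 2 μ → T (f + g) = T f + T g
  map_smul : ∀ (c : ℂ) (f), MemLp f 2 μ → T (c • f) = c • T f
  norm_bound : ∀ f, MemLp f 2 μ → eLpNorm (T f) 2 μ ≤ ENNReal.ofReal CT * eLpNorm f 2 μ
  rep : ∀ f : X → ℂ, (∃ M, ∀ x, ‖f x‖ ≤ M) → Bornology.IsBounded (Function.support f) →
    ∀ x, x ∉ tsupport f → T f x = ∫ y, K x y * f y ∂μ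

/-- A David–Mattila lattice with parameters `C0, A0` associated to `μ`:
for each generation `k` a Borel partition `cells k` of `supp μ`, each cell `Q` carrying a
ball `B(Q) = B(center k Q, radius k Q)`. -/
structure DavidMattila (μ : Measure X) (C0 A0 : ℝ) where
  cells : ℕ → Set (Set X)
  center : ℕ → Set X → X
  radius : ℕ → Set X → ℝ
  measurable : ∀ k, ∀ Q ∈ cells k, MeasurableSet Q
  cover : ∀ k, ⋃₀ cells k = msupport μ
  pairwise_disjoint : ∀ k, ∀ Q ∈ cells k, ∀ R ∈ cells k, Q ≠ R → Disjoint Q R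
  nested : ∀ k l, k < l → ∀ Q ∈ cells l, ∀ R ∈ cells k, Q ⊆ R ∨ Disjoint Q R
  center_mem : ∀ k, ∀ Q ∈ cells k, center k Q ∈ msupport μ
  radius_lb : ∀ k, ∀ Q ∈ cells k, A0 ^ (-(k : ℤ)) ≤ radius k Q
  radius_ub : ∀ k, ∀ Q ∈ cells k, radius k Q ≤ C0 * A0 ^ (-(k : ℤ))
  ball_subset : ∀ k, ∀ Q ∈ cells k, msupport μ ∩ ball (center k Q) (radius k Q) ⊆ Q
  subset_ball : ∀ k, ∀ Q ∈ cells k, Q ⊆ msupport μ ∩ ball (center k Q) (28 * radius k Q)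
  disjoint_five : ∀ k, ∀ Q ∈ cells k, ∀ R ∈ cells k, Q ≠ R →
    Disjoint (ball (center k Q) (5 * radius k Q)) (ball (center k R) (5 * radius k R))
  nondoubling : ∀ k, ∀ Q ∈ cells k,
    ENNReal.ofReal C0 * μ (ball (center k Q) (radius k Q)) <
        μ (ball (center k Q) (100 * radius k Q)) →
      radius k Q = A0 ^ (-(k : ℤ)) ∧
      ∀ c : ℝ, 1 ≤ c → c ≤ C0 →
        ENNReal.ofReal C0 * μ (ball (center k Q) (c * radius k Q)) ≤
          μ (ball (center k Q) (100 * c * radius k Q))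

/-- The average `A(f,Q) = μ(αB(Q))⁻¹ ∫_{30B(Q)} |f| dμ` attached to a ball `B(z,r)`. -/
noncomputable def cellAvg (μ : Measure X) (α : ℝ) (f : X → ℂ) (z : X) (r : ℝ) : ℝ≥0∞ :=
  (∫⁻ y in ball z (30 * r), ‖f y‖₊ ∂μ) / μ (ball z (α * r))

/-- `Θ(Q) = μ(αB(Q)) / λ(z_Q, α r(Q))`. -/
noncomputable def theta (μ : Measure X) (lam : X → ℝ → ℝ) (α : ℝ) (z : X) (r : ℝ) : ℝ≥0∞ :=
  μ (ball z (α * r)) / ENNReal.ofReal (lam z (α * r))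

/-- The maximal function `M_λ f(x) = sup_{R>0} λ(x,R)⁻¹ ∫_{B(x,R)} |f| dμ`. -/
noncomputable def Mlam (μ : Measure X) (lam : X → ℝ → ℝ) (f : X → ℂ) (x : X) : ℝ≥0∞ :=
  ⨆ (R : ℝ) (_ : 0 < R), (∫⁻ y in ball x R, ‖f y‖₊ ∂μ) / ENNReal.ofReal (lam x R)

/-- The localized grand maximal truncated operator `N_{Q₀}`. -/
noncomputable def grandMax (μ : Measure X) {C0 A0 : ℝ} (D : DavidMattila μ C0 A0)
    (K : X → X → ℂ) (Q0 : Set X) (f : X → ℂ) (x : X) : ℝ≥0∞ :=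
  Q0.indicator (fun x' =>
    ⨆ (k : ℕ) (P : Set X) (_ : P ∈ D.cells k) (_ : x' ∈ P) (_ : P ⊆ Q0) (y : X) (_ : y ∈ P),
      ENNReal.ofReal
        ‖∫ z in (ball (D.center k P) (30 * D.radius k P))ᶜ, K y z * f z ∂μ‖) x

/-- `∫_S w dμ` for a weight `w`. -/
noncomputable def wInt (μ : Measure X) (w : X → ℝ) (S : Set X) : ℝ≥0∞ :=
  ∫⁻ x in S, ENNReal.ofReal (w x) ∂μ

end
section Aux
set_option linter.unusedSectionVars false
open MeasureTheory Metric Set ENNReal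

variable {X : Type*} [MetricSpace X] [MeasurableSpace X] [BorelSpace X]
variable {μ : Measure X} {lam : X → ℝ → ℝ} {Cl : ℝ} {ω : ℝ → ℝ} {K : X → X → ℂ} {CK : ℝ}

lemma IsUpperDoubling.Cl_pos (hud : IsUpperDoubling μ lam Cl) : 0 < Cl :=
  lt_trans one_pos hud.one_lt

lemma IsUpperDoubling.lam_scale (hud : IsUpperDoubling μ lam Cl) (n : ℕ) (x : X) {r s : ℝ}
    (hr : 0 < r) (hs : 0 < s) (hsr : s ≤ 2 ^ n * r) : lam x s ≤ Cl ^ n * lam x r := by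
  induction n generalizing s with
  | zero =>
    simpa using hud.lam_mono x s r hs (by simpa using hsr)
  | succ n ih =>
    rcases le_or_gt s (2 ^ n * r) with h | h
    · calc lam x s ≤ Cl ^ n * lam x r := ih hs h
        _ ≤ Cl ^ (n + 1) * lam x r := by
            have h1 : (1:ℝ) ≤ Cl := le_of_lt hud.one_lt
            have : Cl ^ n ≤ Cl ^ (n+1) := pow_le_pow_right₀ h1 (Nat.le_succ n)
            have hl : 0 ≤ lam x r := le_of_lt (hud.lam_pos x r hr)
            exact mul_le_mul_of_nonneg_right this hl
    · have hs2 : 0 < s / 2 := by linarith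
      have : lam x (s/2) ≤ Cl ^ n * lam x r := by
        apply ih hs2
        rw [pow_succ] at hsr
        linarith
      calc lam x s ≤ Cl * lam x (s/2) := hud.halving x s hs
        _ ≤ Cl * (Cl ^ n * lam x r) :=
            mul_le_mul_of_nonneg_left this (le_of_lt hud.Cl_pos)
        _ = Cl ^ (n+1) * lam x r := by ring

lemma IsDiniModulus.mono' (hω : IsDiniModulus ω) {s t : ℝ} (hs : 0 ≤ s) (hst : s ≤ t) :
    ω s ≤ ω t := hω.mono hs (le_trans hs hst) hst

lemma IsDiniModulus.diniNorm_nonneg (hω : IsDiniModulus ω) : 0 ≤ diniNorm ω :=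
  tsum_nonneg fun j => hω.nonneg _ (le_of_lt (by positivity))

lemma IsDiniModulus.diniNorm_pos (hω : IsDiniModulus ω) : 0 < diniNorm ω := by
  have h0 : 0 < ω ((2:ℝ) ^ (-(0:ℕ):ℤ)) := hω.pos _ (by norm_num)
  calc (0:ℝ) < ω ((2:ℝ) ^ (-(0:ℕ):ℤ)) := h0
    _ ≤ diniNorm ω := hω.summable.le_tsum 0 fun j _ => hω.nonneg _ (le_of_lt (by positivity))

/-- continuity of `K y ·` off `y`. -/
lemma IsCZKernel.continuousAt_snd (hud : IsUpperDoubling μ lam Cl) (hω : IsDiniModulus ω)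
    (hK : IsCZKernel lam K CK ω) {y z₀ : X} (h : z₀ ≠ y) :
    ContinuousAt (fun z => K y z) z₀ := by
  rw [Metric.continuousAt_iff]
  intro ε hε
  have hd₀ : 0 < dist z₀ y := dist_pos.2 h
  set d₀ := dist z₀ y with hd₀def
  have hlam : 0 < lam z₀ d₀ := hud.lam_pos _ _ hd₀
  -- choose j with ω (2^{-j}) < ε * lam z₀ d₀
  have htend : Filter.Tendsto (fun j : ℕ => ω ((2:ℝ) ^ (-(j:ℤ)))) Filter.atTop (nhds 0) :=
    hω.summable.tendsto_atTop_zero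
  have hev : ∀ᶠ j : ℕ in Filter.atTop, ω ((2:ℝ) ^ (-(j:ℤ))) < ε * lam z₀ d₀ := by
    have := htend.eventually (eventually_lt_nhds (by positivity : (0:ℝ) < ε * lam z₀ d₀))
    exact this
  obtain ⟨j, hj⟩ := hev.exists
  have h2j : (0:ℝ) < (2:ℝ) ^ (-(j:ℤ)) := by positivity
  refine ⟨min ((2:ℝ) ^ (-(j:ℤ)) * d₀) (d₀ / 4), by positivity, ?_⟩
  intro z hz
  have hz1 : dist z z₀ < (2:ℝ) ^ (-(j:ℤ)) * d₀ := lt_of_lt_of_le hz (min_le_left _ _)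
  have hz2 : dist z z₀ < d₀ / 4 := lt_of_lt_of_le hz (min_le_right _ _)
  have hsm := hK.smooth z₀ z y h (by rw [dist_comm z₀ z]; linarith)
  have hle : ‖K y z₀ - K y z‖ ≤ ω (dist z₀ z / d₀) / lam z₀ d₀ := by
    have h1 : (0:ℝ) ≤ ‖K z₀ y - K z y‖ := norm_nonneg _
    linarith [hsm]
  have hω1 : ω (dist z₀ z / d₀) ≤ ω ((2:ℝ) ^ (-(j:ℤ))) := by
    apply hω.mono' (by positivity)
    rw [div_le_iff₀ hd₀, dist_comm z₀ z]
    linarith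
  have : dist (K y z) (K y z₀) ≤ ω ((2:ℝ) ^ (-(j:ℤ))) / lam z₀ d₀ := by
    rw [dist_eq_norm, ← norm_neg]
    simp only [neg_sub]
    calc ‖K y z₀ - K y z‖ ≤ ω (dist z₀ z / d₀) / lam z₀ d₀ := hle
      _ ≤ ω ((2:ℝ) ^ (-(j:ℤ))) / lam z₀ d₀ := by gcongr
  calc dist (K y z) (K y z₀) ≤ ω ((2:ℝ) ^ (-(j:ℤ))) / lam z₀ d₀ := this
    _ < ε := by rw [div_lt_iff₀ hlam]; linarith

end Aux
section Aux2
set_option linter.unusedSectionVars false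
open MeasureTheory Metric Set ENNReal

variable {X : Type*} [MetricSpace X] [MeasurableSpace X] [BorelSpace X]
variable {μ : Measure X} {lam : X → ℝ → ℝ} {Cl : ℝ} {ω : ℝ → ℝ} {K : X → X → ℂ} {CK : ℝ}

/-- a.e. strong measurability of `z ↦ K y z * f z` on sets avoiding `y`. -/
lemma aesm_kernel_mul (hud : IsUpperDoubling μ lam Cl) (hω : IsDiniModulus ω)
    (hK : IsCZKernel lam K CK ω) {f : X → ℂ} (hf : AEStronglyMeasurable f μ)
    {y : X} {S : Set X} (hS : MeasurableSet S) (hSy : ∀ z ∈ S, z ≠ y) :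
    AEStronglyMeasurable (fun z => K y z * f z) (μ.restrict S) := by
  have hU : MeasurableSet ({y}ᶜ : Set X) := (measurableSet_singleton y).compl
  have hcont : ContinuousOn (fun z => K y z) ({y}ᶜ : Set X) := fun z hz =>
    (hK.continuousAt_snd hud hω (by simpa using hz)).continuousWithinAt
  have h1 : AEMeasurable (fun z => K y z) (μ.restrict ({y}ᶜ : Set X)) :=
    hcont.aemeasurable hU
  have h2 : AEMeasurable (fun z => K y z) (μ.restrict S) :=
    h1.mono_measure (Measure.restrict_mono (fun z hz => hSy z hz) le_rfl)
  exact (h2.mul (hf.aemeasurable.restrict)).aestronglyMeasurable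

/-- integrability of `z ↦ K w z * f z` on sets at distance `≥ c` from `w`. -/
lemma integrableOn_kernel_mul (hud : IsUpperDoubling μ lam Cl) (hω : IsDiniModulus ω)
    (hK : IsCZKernel lam K CK ω) (hCK : 0 ≤ CK) {f : X → ℂ} (hf : Integrable f μ)
    {w : X} {S : Set X} (hS : MeasurableSet S) {c : ℝ} (hc : 0 < c)
    (hdist : ∀ z ∈ S, c ≤ dist w z) :
    IntegrableOn (fun z => K w z * f z) S μ := by
  have hlam : 0 < lam w c := hud.lam_pos _ _ hc
  apply Integrable.mono' (g := fun z => (CK / lam w c) * ‖f z‖)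
  · exact (hf.norm.restrict).const_mul _
  · apply aesm_kernel_mul hud hω hK hf.aestronglyMeasurable hS
    intro z hz
    intro hzw
    have := hdist z hz
    rw [hzw, dist_self] at this
    linarith
  · refine (ae_restrict_iff' hS).2 (Filter.Eventually.of_forall fun z hz => ?_)
    have hzw : w ≠ z := by
      intro h; have := hdist z hz; rw [h, dist_self] at this; linarith
    have hd : 0 < dist w z := lt_of_lt_of_le hc (hdist z hz)
    calc ‖K w z * f z‖ = ‖K w z‖ * ‖f z‖ := norm_mul _ _
      _ ≤ (CK / lam w (dist w z)) * ‖f z‖ :=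
          mul_le_mul_of_nonneg_right (hK.size w z hzw) (norm_nonneg _)
      _ ≤ (CK / lam w c) * ‖f z‖ := by
          have h1 : lam w c ≤ lam w (dist w z) := hud.lam_mono w c _ hc (hdist z hz)
          have : CK / lam w (dist w z) ≤ CK / lam w c :=
            div_le_div_of_nonneg_left hCK hlam h1
          exact mul_le_mul_of_nonneg_right this (norm_nonneg _)

lemma setLIntegral_mono_forall {g g' : X → ℝ≥0∞} {S : Set X} (hS : MeasurableSet S)
    (h : ∀ z ∈ S, g z ≤ g' z) : ∫⁻ z in S, g z ∂μ ≤ ∫⁻ z in S, g' z ∂μ :=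
  lintegral_mono_ae ((ae_restrict_iff' hS).2 (Filter.Eventually.of_forall h))

/-- `∫_{ball x R} ‖f‖ ≤ Mlam f x * lam x R`. -/
lemma lintegral_ball_le_Mlam (hud : IsUpperDoubling μ lam Cl) (f : X → ℂ) (x : X) {R : ℝ}
    (hR : 0 < R) :
    ∫⁻ z in ball x R, ‖f z‖₊ ∂μ ≤ Mlam μ lam f x * ENNReal.ofReal (lam x R) := by
  have hlam : 0 < lam x R := hud.lam_pos _ _ hR
  have h1 : (∫⁻ z in ball x R, ‖f z‖₊ ∂μ) / ENNReal.ofReal (lam x R) ≤ Mlam μ lam f x := by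
    refine le_iSup_of_le R (le_iSup_of_le hR le_rfl)
  rwa [ENNReal.div_le_iff_le_mul (Or.inl (by simp [hlam])) (Or.inl ENNReal.ofReal_ne_top)] at h1

/-- master bound for error terms, lintegral form. -/
lemma lint_term_bound (hud : IsUpperDoubling μ lam Cl) {g f : X → ℂ} {x : X} {U : Set X}
    (hUm : MeasurableSet U) {C2 R C3 : ℝ} (hR : 0 < R) (hU : U ⊆ ball x R)
    (hg : ∀ z ∈ U, ‖g z‖ ≤ C2) (hle : C2 * lam x R ≤ C3) (hC2 : 0 ≤ C2) :
    ∫⁻ z in U, ‖g z * f z‖₊ ∂μ ≤ ENNReal.ofReal C3 * Mlam μ lam f x := by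
  have step1 : ∫⁻ z in U, ‖g z * f z‖₊ ∂μ ≤ ENNReal.ofReal C2 * ∫⁻ z in U, ‖f z‖₊ ∂μ := by
    rw [← lintegral_const_mul' _ _ ENNReal.ofReal_ne_top]
    refine setLIntegral_mono_forall hUm fun z hz => ?_
    calc (‖g z * f z‖₊ : ℝ≥0∞) = ENNReal.ofReal ‖g z * f z‖ :=
          (ofReal_norm _).symm
      _ ≤ ENNReal.ofReal (C2 * ‖f z‖) := by
          apply ENNReal.ofReal_le_ofReal
          rw [norm_mul]
          exact mul_le_mul_of_nonneg_right (hg z hz) (norm_nonneg _)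
      _ = ENNReal.ofReal C2 * (‖f z‖₊ : ℝ≥0∞) := by
          rw [ENNReal.ofReal_mul hC2]; exact congrArg _ (ofReal_norm _)
  have step2 : ∫⁻ z in U, ‖f z‖₊ ∂μ ≤ ∫⁻ z in ball x R, ‖f z‖₊ ∂μ :=
    lintegral_mono' (Measure.restrict_mono hU le_rfl) le_rfl
  have hlamR : 0 < lam x R := hud.lam_pos _ _ hR
  calc ∫⁻ z in U, ‖g z * f z‖₊ ∂μ ≤ ENNReal.ofReal C2 * ∫⁻ z in ball x R, ‖f z‖₊ ∂μ :=
        step1.trans (mul_le_mul_right step2 _)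
    _ ≤ ENNReal.ofReal C2 * (Mlam μ lam f x * ENNReal.ofReal (lam x R)) :=
        mul_le_mul_right (lintegral_ball_le_Mlam hud f x hR) _
    _ = ENNReal.ofReal C2 * ENNReal.ofReal (lam x R) * Mlam μ lam f x := by ring
    _ = ENNReal.ofReal (C2 * lam x R) * Mlam μ lam f x := by
        rw [ENNReal.ofReal_mul hC2]
    _ ≤ ENNReal.ofReal C3 * Mlam μ lam f x :=
        mul_le_mul_left (ENNReal.ofReal_le_ofReal hle) _

/-- master bound for error terms, integral-norm form. -/
lemma term_bound (hud : IsUpperDoubling μ lam Cl) {g f : X → ℂ} {x : X} {U : Set X}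
    (hUm : MeasurableSet U) {C2 R C3 : ℝ} (hR : 0 < R) (hU : U ⊆ ball x R)
    (hg : ∀ z ∈ U, ‖g z‖ ≤ C2) (hle : C2 * lam x R ≤ C3) (hC2 : 0 ≤ C2) :
    ENNReal.ofReal ‖∫ z in U, g z * f z ∂μ‖ ≤ ENNReal.ofReal C3 * Mlam μ lam f x := by
  calc ENNReal.ofReal ‖∫ z in U, g z * f z ∂μ‖ = ↑‖∫ z in U, g z * f z ∂μ‖₊ :=
        ofReal_norm _
    _ ≤ ∫⁻ z in U, ‖g z * f z‖₊ ∂μ := enorm_integral_le_lintegral_enorm _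
    _ ≤ ENNReal.ofReal C3 * Mlam μ lam f x := lint_term_bound hud hUm hR hU hg hle hC2

end Aux2
section Aux3
set_option linter.unusedSectionVars false
set_option maxHeartbeats 1000000
open MeasureTheory Metric Set ENNReal

variable {X : Type*} [MetricSpace X] [MeasurableSpace X] [BorelSpace X]
variable {μ : Measure X} {lam : X → ℝ → ℝ} {Cl : ℝ} {ω : ℝ → ℝ} {K : X → X → ℂ} {CK : ℝ}

/-- shell covering: the complement of a ball is covered by dyadic shells. -/
lemma shell_cover {x : X} {r : ℝ} (hr : 0 < r) {z' : X} (hz' : 224 * r ≤ dist x z') :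
    ∃ j : ℕ, z' ∈ ball x (224 * 2 ^ (j+1) * r) \ ball x (224 * 2 ^ j * r) := by
  have hex : ∃ n : ℕ, dist x z' < 224 * 2 ^ n * r := by
    obtain ⟨n, hn⟩ := pow_unbounded_of_one_lt (dist x z' / (224 * r)) (by norm_num : (1:ℝ) < 2)
    exact ⟨n, by rw [div_lt_iff₀ (by positivity)] at hn; nlinarith⟩
  set n₀ := Nat.find hex with hn₀
  have hn₀spec : dist x z' < 224 * 2 ^ n₀ * r := Nat.find_spec hex
  have hn₀pos : n₀ ≠ 0 := by
    intro h0
    rw [h0] at hn₀spec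
    simp only [pow_zero, mul_one] at hn₀spec
    nlinarith
  obtain ⟨j, hj⟩ := Nat.exists_eq_succ_of_ne_zero hn₀pos
  refine ⟨j, ?_, ?_⟩
  · rw [mem_ball, dist_comm]; rw [hj] at hn₀spec; exact hn₀spec
  · intro hmem
    rw [mem_ball, dist_comm] at hmem
    exact Nat.find_min hex (by omega : j < n₀) hmem

/-- The core pointwise estimate. -/
lemma pointwise_bound (hud : IsUpperDoubling μ lam Cl) (hω : IsDiniModulus ω)
    (hK : IsCZKernel lam K CK ω) (hCK : 0 ≤ CK) {f : X → ℂ} (hf : Integrable f μ)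
    {x y z : X} {r : ℝ} (hr : 0 < r) (hx : dist x z ≤ 28 * r) (hy : dist y z ≤ 28 * r) :
    ENNReal.ofReal ‖∫ z' in (ball z (30 * r))ᶜ, K y z' * f z' ∂μ‖ ≤
      Tsharp μ K f x +
        ENNReal.ofReal (CK * Cl ^ 2 + Cl * diniNorm ω + CK * Cl ^ 9) * Mlam μ lam f x := by
  have hCl0 : 0 < Cl := hud.Cl_pos
  have hCl1 : 1 ≤ Cl := le_of_lt hud.one_lt
  have hxy : dist x y ≤ 56 * r := by
    have := dist_triangle x z y
    rw [dist_comm z y] at this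
    linarith
  set S : Set X := (ball z (30 * r))ᶜ with hSdef
  by_cases hInt : IntegrableOn (fun z' => K y z' * f z') S μ
  swap
  · rw [integral_undef hInt]; simp
  set A : Set X := (ball z (256 * r))ᶜ with hAdef
  set C : Set X := (closedBall x (200 * r))ᶜ with hCdef
  have hSm : MeasurableSet S := measurableSet_ball.compl
  have hAm : MeasurableSet A := measurableSet_ball.compl
  have hCm : MeasurableSet C := measurableSet_closedBall.compl
  have hAS : A ⊆ S := compl_subset_compl.2 (ball_subset_ball (by linarith))
  -- distance facts
  have hdistA : ∀ z' ∈ A, 228 * r ≤ dist x z' := by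
    intro z' hz'
    have h1 : 256 * r ≤ dist z z' := by
      simp only [hAdef, mem_compl_iff, mem_ball, not_lt, dist_comm] at hz'
      exact hz'
    have := dist_triangle z x z'
    rw [dist_comm z x] at this
    linarith
  have hdistC : ∀ z' ∈ C, 200 * r ≤ dist x z' := by
    intro z' hz'
    simp only [hCdef, mem_compl_iff, mem_closedBall, not_le, dist_comm] at hz'
    linarith
  have hAC : A ⊆ C := by
    intro z' hz'
    simp only [hCdef, mem_compl_iff, mem_closedBall, dist_comm, not_le]
    have := hdistA z' hz'
    linarith
  have hdistS : ∀ z' ∈ S, 2 * r ≤ dist y z' := by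
    intro z' hz'
    have h1 : 30 * r ≤ dist z z' := by
      simp only [hSdef, mem_compl_iff, mem_ball, not_lt, dist_comm] at hz'
      exact hz'
    have := dist_triangle z y z'
    rw [dist_comm z y] at this
    linarith
  have hball : ∀ z' ∈ ball z (256 * r), z' ∈ ball x (512 * r) := by
    intro z' hz'
    rw [mem_ball] at hz' ⊢
    have h1 := dist_triangle z' z x
    have h2 : dist z x ≤ 28 * r := by rw [dist_comm]; exact hx
    linarith
  -- integrability on subsets
  set h : X → ℂ := fun z' => K y z' * f z' with hhdef
  set Kx : X → ℂ := fun z' => K x z' * f z' with hKxdef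
  set Ann : Set X := S ∩ ball z (256 * r) with hAnndef
  have hIntA : IntegrableOn h A μ := hInt.mono_set hAS
  have hIntAnn : IntegrableOn h Ann μ := hInt.mono_set inter_subset_left
  have hIntC : IntegrableOn Kx C μ :=
    integrableOn_kernel_mul hud hω hK hCK hf hCm (by positivity : (0:ℝ) < 200 * r) hdistC
  have hIntKxA : IntegrableOn Kx A μ := hIntC.mono_set hAC
  have hIntCdA : IntegrableOn Kx (C \ A) μ := hIntC.mono_set diff_subset
  -- splittings
  have hSeq : S = A ∪ Ann := by
    ext z'
    simp only [hAnndef, hSdef, hAdef, mem_union, mem_inter_iff, mem_compl_iff, mem_ball]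
    constructor
    · intro hmem
      by_cases h2 : dist z' z < 256 * r
      · exact Or.inr ⟨hmem, h2⟩
      · exact Or.inl h2
    · rintro (hmem | ⟨hmem, _⟩)
      · intro hlt; exact hmem (lt_of_lt_of_le hlt (by linarith))
      · exact hmem
  have hsplit1 : ∫ z' in S, h z' ∂μ = (∫ z' in A, h z' ∂μ) + ∫ z' in Ann, h z' ∂μ := by
    rw [hSeq]
    exact setIntegral_union (disjoint_compl_left.mono_right inter_subset_right)
      (hSm.inter measurableSet_ball) hIntA hIntAnn
  have hsplit2 : ∫ z' in C, Kx z' ∂μ =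
      (∫ z' in A, Kx z' ∂μ) + ∫ z' in C \ A, Kx z' ∂μ := by
    conv_lhs => rw [(union_diff_cancel hAC).symm]
    exact setIntegral_union disjoint_sdiff_self_right (hCm.diff hAm) hIntKxA hIntCdA
  have hIntdiff : IntegrableOn (fun z' => (K y z' - K x z') * f z') A μ := by
    have heq : (fun z' => (K y z' - K x z') * f z') = fun z' => h z' - Kx z' := by
      funext z'; simp only [hhdef, hKxdef]; ring
    rw [heq]; exact hIntA.sub hIntKxA
  have hsplit3 : ∫ z' in A, h z' ∂μ =
      (∫ z' in A, Kx z' ∂μ) + ∫ z' in A, (K y z' - K x z') * f z' ∂μ := by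
    rw [← integral_add hIntKxA hIntdiff]
    congr 1
    funext z'
    simp only [hhdef, hKxdef]; ring
  set a := ∫ z' in C, Kx z' ∂μ
  set b := ∫ z' in C \ A, Kx z' ∂μ
  set c := ∫ z' in A, (K y z' - K x z') * f z' ∂μ
  set d := ∫ z' in Ann, h z' ∂μ
  have hkey : ∫ z' in S, h z' ∂μ = a - b + c + d := by
    rw [hsplit1, hsplit3]
    have : ∫ z' in A, Kx z' ∂μ = a - b := by rw [hsplit2]; ring
    rw [this]
  have hnorm : ‖∫ z' in S, h z' ∂μ‖ ≤ ‖a‖ + ‖b‖ + ‖c‖ + ‖d‖ := by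
    rw [hkey]
    calc ‖a - b + c + d‖ ≤ ‖a - b + c‖ + ‖d‖ := norm_add_le _ _
      _ ≤ ‖a - b‖ + ‖c‖ + ‖d‖ := by
          have := norm_add_le (a - b) c
          linarith
      _ ≤ ‖a‖ + ‖b‖ + ‖c‖ + ‖d‖ := by
          have := norm_sub_le a b
          linarith
  -- term bounds
  have hTa : ENNReal.ofReal ‖a‖ ≤ Tsharp μ K f x := by
    simp only [Tsharp]
    exact le_iSup_of_le (200 * r) (le_iSup_of_le (by positivity) le_rfl)
  have hlam200 : 0 < lam x (200 * r) := hud.lam_pos _ _ (by positivity)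
  have hlam2r : 0 < lam y (2 * r) := hud.lam_pos _ _ (by positivity)
  have hTb : ENNReal.ofReal ‖b‖ ≤ ENNReal.ofReal (CK * Cl ^ 2) * Mlam μ lam f x := by
    apply term_bound hud (hCm.diff hAm) (by positivity : (0:ℝ) < 512 * r)
    · intro z' hz'
      have hz2 : z' ∈ ball z (256 * r) := by
        have := hz'.2
        simpa only [hAdef, mem_compl_iff, not_not] using this
      exact hball z' hz2
    · intro z' hz'
      have hd : 200 * r ≤ dist x z' := hdistC z' hz'.1
      have hne : x ≠ z' := by
        intro hxeq; rw [hxeq, dist_self] at hd; linarith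
      calc ‖K x z'‖ ≤ CK / lam x (dist x z') := hK.size x z' hne
        _ ≤ CK / lam x (200 * r) :=
            div_le_div_of_nonneg_left hCK hlam200 (hud.lam_mono x _ _ (by positivity) hd)
    · have hsc : lam x (512 * r) ≤ Cl ^ 2 * lam x (200 * r) :=
        hud.lam_scale 2 x (by positivity) (by positivity) (by nlinarith)
      rw [div_mul_eq_mul_div, div_le_iff₀ hlam200]
      calc CK * lam x (512 * r) ≤ CK * (Cl ^ 2 * lam x (200 * r)) :=
            mul_le_mul_of_nonneg_left hsc hCK
        _ = CK * Cl ^ 2 * lam x (200 * r) := by ring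
    · exact div_nonneg hCK (le_of_lt hlam200)
  have hTd : ENNReal.ofReal ‖d‖ ≤ ENNReal.ofReal (CK * Cl ^ 9) * Mlam μ lam f x := by
    apply term_bound hud (hSm.inter measurableSet_ball) (by positivity : (0:ℝ) < 512 * r)
    · intro z' hz'; exact hball z' hz'.2
    · intro z' hz'
      have hd : 2 * r ≤ dist y z' := hdistS z' hz'.1
      have hne : y ≠ z' := by
        intro hyeq; rw [hyeq, dist_self] at hd; linarith
      calc ‖K y z'‖ ≤ CK / lam y (dist y z') := hK.size y z' hne
        _ ≤ CK / lam y (2 * r) :=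
            div_le_div_of_nonneg_left hCK hlam2r (hud.lam_mono y _ _ (by positivity) hd)
    · have h1 : lam x (512 * r) ≤ Cl * lam y (512 * r) :=
        hud.close x y (512 * r) (by positivity) (by linarith)
      have h2 : lam y (512 * r) ≤ Cl ^ 8 * lam y (2 * r) :=
        hud.lam_scale 8 y (by positivity) (by positivity) (le_of_eq (by ring))
      have h3 : lam x (512 * r) ≤ Cl ^ 9 * lam y (2 * r) := by
        calc lam x (512 * r) ≤ Cl * lam y (512 * r) := h1
          _ ≤ Cl * (Cl ^ 8 * lam y (2 * r)) := mul_le_mul_of_nonneg_left h2 (le_of_lt hCl0)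
          _ = Cl ^ 9 * lam y (2 * r) := by ring
      rw [div_mul_eq_mul_div, div_le_iff₀ hlam2r]
      calc CK * lam x (512 * r) ≤ CK * (Cl ^ 9 * lam y (2 * r)) :=
            mul_le_mul_of_nonneg_left h3 hCK
        _ = CK * Cl ^ 9 * lam y (2 * r) := by ring
    · exact div_nonneg hCK (le_of_lt hlam2r)
  -- Dini term
  set Shell : ℕ → Set X := fun j => ball x (224 * 2 ^ (j+1) * r) \ ball x (224 * 2 ^ j * r)
    with hShdef
  have hTc : ENNReal.ofReal ‖c‖ ≤ ENNReal.ofReal (Cl * diniNorm ω) * Mlam μ lam f x := by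
    have hAcover : A ⊆ ⋃ j, Shell j := by
      intro z' hz'
      have := shell_cover hr (le_trans (by linarith) (hdistA z' hz'))
      exact mem_iUnion.2 this
    have hshellbound : ∀ j : ℕ,
        ∫⁻ z' in Shell j, ‖(K y z' - K x z') * f z'‖₊ ∂μ ≤
          ENNReal.ofReal (Cl * ω ((2:ℝ) ^ (-(j:ℤ)))) * Mlam μ lam f x := by
      intro j
      have h2jpos : (0:ℝ) < 224 * 2 ^ j * r := by positivity
      have hlamj : 0 < lam x (224 * 2 ^ j * r) := hud.lam_pos _ _ h2jpos
      have hωj : 0 ≤ ω ((2:ℝ) ^ (-(j:ℤ))) := hω.nonneg _ (le_of_lt (by positivity))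
      apply lint_term_bound hud (measurableSet_ball.diff measurableSet_ball)
        (by positivity : (0:ℝ) < 224 * 2 ^ (j+1) * r) diff_subset
      · intro z' hz'
        have hdlow : 224 * 2 ^ j * r ≤ dist x z' := by
          have := hz'.2
          rw [mem_ball, dist_comm] at this
          exact not_lt.1 this
        have hne : x ≠ z' := by
          intro hxeq; rw [hxeq, dist_self] at hdlow; linarith
        have h2j1 : (1:ℝ) ≤ 2 ^ j := by simpa using pow_le_pow_right₀ (by norm_num : (1:ℝ) ≤ 2) (Nat.zero_le j)
        have hhalf : dist x y < dist x z' / 2 := by nlinarith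
        have hsm := hK.smooth x y z' hne hhalf
        have hnn : ‖K y z' - K x z'‖ ≤ ω (dist x y / dist x z') / lam x (dist x z') := by
          rw [norm_sub_rev]
          have h0 : (0:ℝ) ≤ ‖K z' x - K z' y‖ := norm_nonneg _
          linarith
        have hd0 : (0:ℝ) < dist x z' := lt_of_lt_of_le (by positivity) hdlow
        have h2jne : ((2:ℝ) ^ j) ≠ 0 := by positivity
        have hratio : dist x y / dist x z' ≤ (2:ℝ) ^ (-(j:ℤ)) := by
          rw [div_le_iff₀ hd0, zpow_neg, zpow_natCast]
          have heq : ((2:ℝ) ^ j)⁻¹ * (224 * 2 ^ j * r) = 224 * r := by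
            field_simp
          calc dist x y ≤ 56 * r := hxy
            _ ≤ 224 * r := by linarith
            _ = ((2:ℝ) ^ j)⁻¹ * (224 * 2 ^ j * r) := heq.symm
            _ ≤ ((2:ℝ) ^ j)⁻¹ * dist x z' :=
                mul_le_mul_of_nonneg_left hdlow (by positivity)
        calc ‖K y z' - K x z'‖ ≤ ω (dist x y / dist x z') / lam x (dist x z') := hnn
          _ ≤ ω ((2:ℝ) ^ (-(j:ℤ))) / lam x (224 * 2 ^ j * r) :=
              div_le_div₀ (hω.nonneg _ (le_of_lt (by positivity)))
                (hω.mono' (by positivity) hratio) hlamj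
                (hud.lam_mono x _ _ h2jpos hdlow)
      · have hhalv : lam x (224 * 2 ^ (j+1) * r) ≤ Cl * lam x (224 * 2 ^ j * r) := by
          have hh := hud.halving x (224 * 2 ^ (j+1) * r) (by positivity)
          have heq : 224 * 2 ^ (j+1) * r / 2 = 224 * 2 ^ j * r := by
            rw [pow_succ]; ring
          rwa [heq] at hh
        rw [div_mul_eq_mul_div, div_le_iff₀ hlamj]
        calc ω ((2:ℝ) ^ (-(j:ℤ))) * lam x (224 * 2 ^ (j+1) * r)
            ≤ ω ((2:ℝ) ^ (-(j:ℤ))) * (Cl * lam x (224 * 2 ^ j * r)) :=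
              mul_le_mul_of_nonneg_left hhalv hωj
          _ = Cl * ω ((2:ℝ) ^ (-(j:ℤ))) * lam x (224 * 2 ^ j * r) := by ring
      · exact div_nonneg hωj (le_of_lt hlamj)
    calc ENNReal.ofReal ‖c‖ = ↑‖c‖₊ := ofReal_norm _
      _ ≤ ∫⁻ z' in A, ‖(K y z' - K x z') * f z'‖₊ ∂μ := enorm_integral_le_lintegral_enorm _
      _ ≤ ∫⁻ z' in ⋃ j, Shell j, ‖(K y z' - K x z') * f z'‖₊ ∂μ :=
          lintegral_mono' (Measure.restrict_mono hAcover le_rfl) le_rfl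
      _ ≤ ∑' (j : ℕ), ∫⁻ z' in Shell j, ‖(K y z' - K x z') * f z'‖₊ ∂μ := lintegral_iUnion_le _ _
      _ ≤ ∑' (j : ℕ), ENNReal.ofReal (Cl * ω ((2:ℝ) ^ (-(j:ℤ)))) * Mlam μ lam f x :=
          ENNReal.tsum_le_tsum hshellbound
      _ = (∑' (j : ℕ), ENNReal.ofReal (Cl * ω ((2:ℝ) ^ (-(j:ℤ))))) * Mlam μ lam f x :=
          ENNReal.tsum_mul_right
      _ = ENNReal.ofReal (Cl * diniNorm ω) * Mlam μ lam f x := by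
          congr 1
          rw [← ENNReal.ofReal_tsum_of_nonneg
            (fun j => mul_nonneg (le_of_lt hCl0) (hω.nonneg _ (le_of_lt (by positivity))))
            (hω.summable.mul_left Cl)]
          congr 1
          rw [diniNorm, ← tsum_mul_left]
  -- assemble
  calc ENNReal.ofReal ‖∫ z' in S, h z' ∂μ‖ ≤
        ENNReal.ofReal (‖a‖ + ‖b‖ + ‖c‖ + ‖d‖) := ENNReal.ofReal_le_ofReal hnorm
    _ = ENNReal.ofReal ‖a‖ + ENNReal.ofReal ‖b‖ + ENNReal.ofReal ‖c‖ +
        ENNReal.ofReal ‖d‖ := by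
        rw [ENNReal.ofReal_add (by positivity) (norm_nonneg _),
          ENNReal.ofReal_add (by positivity) (norm_nonneg _),
          ENNReal.ofReal_add (norm_nonneg _) (norm_nonneg _)]
    _ ≤ Tsharp μ K f x + (ENNReal.ofReal (CK * Cl ^ 2) * Mlam μ lam f x +
        ENNReal.ofReal (Cl * diniNorm ω) * Mlam μ lam f x +
        ENNReal.ofReal (CK * Cl ^ 9) * Mlam μ lam f x) := by
        calc ENNReal.ofReal ‖a‖ + ENNReal.ofReal ‖b‖ + ENNReal.ofReal ‖c‖ +
            ENNReal.ofReal ‖d‖ ≤ Tsharp μ K f x +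
              ENNReal.ofReal (CK * Cl ^ 2) * Mlam μ lam f x +
              ENNReal.ofReal (Cl * diniNorm ω) * Mlam μ lam f x +
              ENNReal.ofReal (CK * Cl ^ 9) * Mlam μ lam f x :=
            add_le_add (add_le_add (add_le_add hTa hTb) hTc) hTd
          _ = Tsharp μ K f x + (ENNReal.ofReal (CK * Cl ^ 2) * Mlam μ lam f x +
              ENNReal.ofReal (Cl * diniNorm ω) * Mlam μ lam f x +
              ENNReal.ofReal (CK * Cl ^ 9) * Mlam μ lam f x) := by ring
    _ = Tsharp μ K f x +
        ENNReal.ofReal (CK * Cl ^ 2 + Cl * diniNorm ω + CK * Cl ^ 9) * Mlam μ lam f x := by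
        congr 1
        have n1 : 0 ≤ CK * Cl ^ 2 := mul_nonneg hCK (by positivity)
        have n2 : 0 ≤ Cl * diniNorm ω := mul_nonneg (le_of_lt hCl0) hω.diniNorm_nonneg
        have n3 : 0 ≤ CK * Cl ^ 9 := mul_nonneg hCK (by positivity)
        rw [ENNReal.ofReal_add (by linarith) n3, ENNReal.ofReal_add n1 n2, add_mul, add_mul]

end Aux3
section Aux4
set_option linter.unusedSectionVars false
set_option maxHeartbeats 1000000
open MeasureTheory Metric Set ENNReal

variable {X : Type*} [MetricSpace X] [MeasurableSpace X] [BorelSpace X]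
variable {μ : Measure X} {lam : X → ℝ → ℝ} {Cl : ℝ}

lemma mlam_weak (hud : IsUpperDoubling μ lam Cl) {f : X → ℂ} (hf : Integrable f μ)
    {z₀ : X} {r₀ : ℝ} (hr₀ : 0 < r₀) (hsupp : Function.support f ⊆ ball z₀ (30 * r₀))
    {Q : Set X} (hQ : Q ⊆ ball z₀ (28 * r₀)) {s : ℝ} (hs : 0 < s) :
    μ {x | x ∈ Q ∧ ENNReal.ofReal s < Mlam μ lam f x} ≤
      ENNReal.ofReal (Cl ^ 3 / s) * ∫⁻ y, ‖f y‖₊ ∂μ := by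
  have hCl0 : 0 < Cl := hud.Cl_pos
  set E := {x | x ∈ Q ∧ ENNReal.ofReal s < Mlam μ lam f x} with hEdef
  have hsne : ENNReal.ofReal s ≠ 0 := by simp [hs]
  -- choice of radii
  have hch : ∀ x ∈ E, ∃ R : ℝ, 0 < R ∧ R ≤ 58 * r₀ ∧
      ENNReal.ofReal s * ENNReal.ofReal (lam x R) < ∫⁻ z in ball x R, ‖f z‖₊ ∂μ := by
    rintro x ⟨hxQ, hx⟩
    rw [Mlam, lt_iSup_iff] at hx
    obtain ⟨R, hR⟩ := hx
    rw [lt_iSup_iff] at hR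
    obtain ⟨hRpos, hR⟩ := hR
    have hlamR : 0 < lam x R := hud.lam_pos _ _ hRpos
    have hkey : ENNReal.ofReal s * ENNReal.ofReal (lam x R) <
        ∫⁻ z in ball x R, ‖f z‖₊ ∂μ := by
      rw [ENNReal.lt_div_iff_mul_lt (Or.inl (by simp [hlamR])) (Or.inl ENNReal.ofReal_ne_top)]
        at hR
      exact hR
    have hxz₀ : dist x z₀ < 28 * r₀ := by
      have := hQ hxQ; rwa [mem_ball] at this
    have hsub : Function.support f ⊆ ball x (58 * r₀) := by
      intro w hw
      have := hsupp hw
      rw [mem_ball] at this ⊢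
      have := dist_triangle w z₀ x
      rw [dist_comm x z₀] at hxz₀
      linarith
    rcases le_or_gt R (58 * r₀) with hcap | hcap
    · exact ⟨R, hRpos, hcap, hkey⟩
    · refine ⟨58 * r₀, by positivity, le_rfl, ?_⟩
      have h1 : ENNReal.ofReal s * ENNReal.ofReal (lam x (58 * r₀)) ≤
          ENNReal.ofReal s * ENNReal.ofReal (lam x R) :=
        mul_le_mul_right (ENNReal.ofReal_le_ofReal
          (hud.lam_mono x _ _ (by positivity) (le_of_lt hcap))) _
      have h2 : ∫⁻ z in ball x R, ‖f z‖₊ ∂μ ≤ ∫⁻ z in ball x (58 * r₀), ‖f z‖₊ ∂μ := by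
        rw [← lintegral_inter_add_diff (hB := measurableSet_ball (x := x) (ε := 58 * r₀))
          (f := fun z => (‖f z‖₊ : ℝ≥0∞)) (A := ball x R)]
        have hzero : ∫⁻ z in ball x R \ ball x (58 * r₀), (‖f z‖₊ : ℝ≥0∞) ∂μ = 0 := by
          have hbound : ∀ z ∈ ball x R \ ball x (58 * r₀), (‖f z‖₊ : ℝ≥0∞) ≤ 0 := by
            intro z hz
            have : f z = 0 := by
              by_contra hne
              exact hz.2 (hsub (Function.mem_support.2 hne))
            simp [this]
          have := setLIntegral_mono_forall (μ := μ)
            (measurableSet_ball.diff measurableSet_ball) hbound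
          simpa using this
        rw [hzero, add_zero]
        exact lintegral_mono' (Measure.restrict_mono inter_subset_right le_rfl) le_rfl
      exact lt_of_le_of_lt h1 (lt_of_lt_of_le hkey h2)
  classical
  set R : X → ℝ := fun x => if h : x ∈ E then (hch x h).choose else 1 with hRdef
  have hRpos : ∀ x ∈ E, 0 < R x := by
    intro x hx; rw [hRdef]; simp only [dif_pos hx]; exact (hch x hx).choose_spec.1
  have hRle : ∀ x ∈ E, R x ≤ 58 * r₀ := by
    intro x hx; rw [hRdef]; simp only [dif_pos hx]; exact (hch x hx).choose_spec.2.1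
  have hRkey : ∀ x ∈ E, ENNReal.ofReal s * ENNReal.ofReal (lam x (R x)) <
      ∫⁻ z in ball x (R x), ‖f z‖₊ ∂μ := by
    intro x hx; rw [hRdef]; simp only [dif_pos hx]; exact (hch x hx).choose_spec.2.2
  -- Vitali
  obtain ⟨u, huE, hdisj, hcov⟩ :=
    Vitali.exists_disjoint_subfamily_covering_enlargement_closedBall E id R (58 * r₀)
      hRle 4 (by norm_num)
  simp only [id_eq] at hdisj hcov
  -- u covers E with 5-fold balls
  have hcover : E ⊆ ⋃ b ∈ u, ball b (5 * R b) := by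
    intro x hx
    obtain ⟨b, hbu, hsub⟩ := hcov x hx
    have hxmem : x ∈ closedBall x (R x) :=
      mem_closedBall_self (le_of_lt (hRpos x hx))
    have : x ∈ closedBall b (4 * R b) := hsub hxmem
    have hRb : 0 < R b := hRpos b (huE hbu)
    refine mem_biUnion hbu ?_
    rw [mem_ball]
    rw [mem_closedBall] at this
    linarith
  -- positive measure of the balls
  have hpos : ∀ b ∈ u, 0 < μ (ball b (R b)) := by
    intro b hbu
    by_contra hzero
    push_neg at hzero
    have h0 : μ (ball b (R b)) = 0 := le_antisymm hzero zero_le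
    have := hRkey b (huE hbu)
    rw [setLIntegral_measure_zero _ _ h0] at this
    exact (not_lt.2 zero_le) this
  -- u is countable
  have hcount : u.Countable := by
    have hfin : μ (⋃ b : u, closedBall (b : X) (R b)) ≠ ⊤ := by
      have hsub : (⋃ b : u, closedBall (b : X) (R b)) ⊆ ball z₀ (87 * r₀) := by
        rintro w hw
        obtain ⟨b, hb⟩ := mem_iUnion.1 hw
        have hbQ : (b : X) ∈ Q := (huE b.2).1
        have hbz₀ : dist (b : X) z₀ < 28 * r₀ := by
          have := hQ hbQ; rwa [mem_ball] at this
        rw [mem_closedBall] at hb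
        have hRb : R (b : X) ≤ 58 * r₀ := hRle _ (huE b.2)
        rw [mem_ball]
        have := dist_triangle w (b : X) z₀
        linarith
      have : μ (ball z₀ (87 * r₀)) < ⊤ :=
        lt_of_le_of_lt (hud.measure_le z₀ _ (by positivity)) ENNReal.ofReal_lt_top
      exact ne_top_of_le_ne_top this.ne (measure_mono hsub)
    have hcnt : Set.Countable {b : u | 0 < μ (closedBall (b : X) (R b))} :=
      Measure.countable_meas_pos_of_disjoint_of_meas_iUnion_ne_top μ
        (fun b => measurableSet_closedBall)
        (fun i j hij => hdisj i.2 j.2 (fun h => hij (Subtype.ext h)))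
        hfin
    have huniv : {b : u | 0 < μ (closedBall (b : X) (R b))} = Set.univ := by
      ext b
      simp only [mem_setOf_eq, mem_univ, iff_true]
      exact lt_of_lt_of_le (hpos b b.2) (measure_mono ball_subset_closedBall)
    rw [huniv] at hcnt
    have : Countable u := Set.countable_univ_iff.1 hcnt
    exact Set.countable_coe_iff.1 this
  haveI : Countable u := Set.countable_coe_iff.2 hcount
  -- the weighted measure
  set ν : Measure X := μ.withDensity (fun z => (‖f z‖₊ : ℝ≥0∞)) with hνdef
  have hν : ∀ (A : Set X), MeasurableSet A → ν A = ∫⁻ z in A, ‖f z‖₊ ∂μ := by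
    intro A hA; rw [hνdef, withDensity_apply _ hA]
  -- main estimate
  calc μ E ≤ μ (⋃ b ∈ u, ball b (5 * R b)) := measure_mono hcover
    _ ≤ ∑' b : u, μ (ball (b : X) (5 * R b)) := measure_biUnion_le μ hcount _
    _ ≤ ∑' b : u, (ENNReal.ofReal (Cl ^ 3) / ENNReal.ofReal s) * ν (ball (b : X) (R b)) := by
        apply ENNReal.tsum_le_tsum
        intro b
        have hRb : 0 < R b := hRpos _ (huE b.2)
        have hlamb : 0 < lam (b : X) (R b) := hud.lam_pos _ _ hRb
        have h1 : μ (ball (b : X) (5 * R b)) ≤ ENNReal.ofReal (Cl ^ 3 * lam (b : X) (R b)) := by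
          calc μ (ball (b : X) (5 * R b)) ≤ ENNReal.ofReal (lam (b : X) (5 * R b)) :=
                hud.measure_le _ _ (by positivity)
            _ ≤ ENNReal.ofReal (Cl ^ 3 * lam (b : X) (R b)) :=
                ENNReal.ofReal_le_ofReal
                  (hud.lam_scale 3 (b : X) hRb (by positivity) (by nlinarith))
        have h2 : ENNReal.ofReal (lam (b : X) (R b)) ≤
            ν (ball (b : X) (R b)) / ENNReal.ofReal s := by
          rw [ENNReal.le_div_iff_mul_le (Or.inl hsne) (Or.inl ENNReal.ofReal_ne_top),
            mul_comm]
          rw [hν _ measurableSet_ball]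
          exact le_of_lt (hRkey _ (huE b.2))
        calc μ (ball (b : X) (5 * R b)) ≤ ENNReal.ofReal (Cl ^ 3 * lam (b : X) (R b)) := h1
          _ = ENNReal.ofReal (Cl ^ 3) * ENNReal.ofReal (lam (b : X) (R b)) :=
              ENNReal.ofReal_mul (by positivity)
          _ ≤ ENNReal.ofReal (Cl ^ 3) * (ν (ball (b : X) (R b)) / ENNReal.ofReal s) :=
              mul_le_mul_right h2 _
          _ = (ENNReal.ofReal (Cl ^ 3) / ENNReal.ofReal s) * ν (ball (b : X) (R b)) := by
              rw [ENNReal.div_eq_inv_mul, ENNReal.div_eq_inv_mul]; ring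
    _ = (ENNReal.ofReal (Cl ^ 3) / ENNReal.ofReal s) * ∑' b : u, ν (ball (b : X) (R b)) :=
        ENNReal.tsum_mul_left
    _ ≤ (ENNReal.ofReal (Cl ^ 3) / ENNReal.ofReal s) * ∫⁻ y, ‖f y‖₊ ∂μ := by
        apply mul_le_mul_right
        have hdisj' : Pairwise (Function.onFun Disjoint fun b : u => ball (b : X) (R b)) := by
          intro i j hij
          exact Disjoint.mono ball_subset_closedBall ball_subset_closedBall
            (hdisj i.2 j.2 (fun h => hij (Subtype.ext h)))
        calc ∑' b : u, ν (ball (b : X) (R b)) = ν (⋃ b : u, ball (b : X) (R b)) :=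
              (measure_iUnion hdisj' (fun b => measurableSet_ball)).symm
          _ ≤ ν Set.univ := measure_mono (subset_univ _)
          _ = ∫⁻ y, ‖f y‖₊ ∂μ := by rw [hνdef, withDensity_apply _ MeasurableSet.univ,
              Measure.restrict_univ]
    _ = ENNReal.ofReal (Cl ^ 3 / s) * ∫⁻ y, ‖f y‖₊ ∂μ := by
        rw [ENNReal.ofReal_div_of_pos hs]

end Aux4
open MeasureTheory Metric Set ENNReal in
/-- The localized grand maximal truncated operators `N_{Q₀}` have weak type `(1,1)`
uniformly in the cell `Q₀`, provided the maximal truncation `T^♯` has weak type `(1,1)`. -/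
theorem grandMax_weak_type
    {X : Type*} [MetricSpace X] [MeasurableSpace X] [BorelSpace X]
    (μ : Measure X) [IsLocallyFiniteMeasure μ]
    (lam : X → ℝ → ℝ) (Cl : ℝ) (hud : IsUpperDoubling μ lam Cl)
    (ω : ℝ → ℝ) (hω : IsDiniModulus ω)
    (K : X → X → ℂ) (CK : ℝ) (hK : IsCZKernel lam K CK ω)
    (C0 A0 : ℝ) (hC0 : 1 < C0) (hA0 : 5000 * C0 < A0)
    (D : DavidMattila μ C0 A0)
    (CW : ℝ)
    (hweak : ∀ g : X → ℂ, Integrable g μ → ∀ t : ℝ, 0 < t →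
      μ {x | ENNReal.ofReal t < Tsharp μ K g x} ≤
        ENNReal.ofReal (CW / t) * ∫⁻ y, ‖g y‖₊ ∂μ) :
    ∃ C : ℝ, 0 < C ∧
      ∀ (k₀ : ℕ), ∀ Q₀ ∈ D.cells k₀,
        ∀ f : X → ℂ, Integrable f μ →
          Function.support f ⊆ ball (D.center k₀ Q₀) (30 * D.radius k₀ Q₀) →
          ∀ t : ℝ, 0 < t →
            μ {x | ENNReal.ofReal t < grandMax μ D K Q₀ f x} ≤
              ENNReal.ofReal (C / t) * ∫⁻ y, ‖f y‖₊ ∂μ := by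
  classical
  have hCl0 : 0 < Cl := hud.Cl_pos
  have hA0pos : (0:ℝ) < A0 := by nlinarith
  set CK' := max CK 0 with hCK'def
  have hCK' : (0:ℝ) ≤ CK' := le_max_right _ _
  have hK' : IsCZKernel lam K CK' ω := by
    refine ⟨fun x y hxy => ?_, hK.smooth⟩
    refine (hK.size x y hxy).trans ?_
    have hl : 0 < lam x (dist x y) := hud.lam_pos _ _ (dist_pos.2 hxy)
    exact div_le_div_of_nonneg_right (le_max_left _ _) hl.le
  set C1 := CK' * Cl ^ 2 + Cl * diniNorm ω + CK' * Cl ^ 9 with hC1def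
  have hC1pos : 0 < C1 := by
    have h1 : 0 < Cl * diniNorm ω := mul_pos hCl0 hω.diniNorm_pos
    have h2 : 0 ≤ CK' * Cl ^ 2 := mul_nonneg hCK' (by positivity)
    have h3 : 0 ≤ CK' * Cl ^ 9 := mul_nonneg hCK' (by positivity)
    rw [hC1def]; linarith
  set a := 2 * max CW 0 with hadef
  set b := 2 * C1 * Cl ^ 3 with hbdef
  have ha0 : 0 ≤ a := by positivity
  have hb0 : 0 < b := by positivity
  refine ⟨a + b, by linarith, ?_⟩
  intro k₀ Q₀ hQ₀ f hf hsupp t ht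
  set z₀ := D.center k₀ Q₀ with hz₀def
  set r₀ := D.radius k₀ Q₀ with hr₀def
  have hr₀ : 0 < r₀ := lt_of_lt_of_le (zpow_pos hA0pos _) (D.radius_lb k₀ Q₀ hQ₀)
  set E := {x | ENNReal.ofReal t < grandMax μ D K Q₀ f x} with hEdef
  set E1 := {x | ENNReal.ofReal (t/2) < Tsharp μ K f x} with hE1def
  set E2 := {x | x ∈ Q₀ ∧ ENNReal.ofReal (t/(2*C1)) < Mlam μ lam f x} with hE2def
  -- pointwise estimate
  have hpt : ∀ x ∈ E, x ∈ Q₀ ∧ ENNReal.ofReal t <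
      Tsharp μ K f x + ENNReal.ofReal C1 * Mlam μ lam f x := by
    intro x hx
    rw [hEdef, mem_setOf_eq] at hx
    by_cases hxQ : x ∈ Q₀
    · refine ⟨hxQ, lt_of_lt_of_le hx ?_⟩
      rw [grandMax, indicator_of_mem hxQ]
      refine iSup_le fun k => iSup_le fun P => iSup_le fun hP => iSup_le fun hxP =>
        iSup_le fun hPQ => iSup_le fun y => iSup_le fun hyP => ?_
      have hrP : 0 < D.radius k P := lt_of_lt_of_le (zpow_pos hA0pos _) (D.radius_lb k P hP)
      have hxd : dist x (D.center k P) ≤ 28 * D.radius k P :=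
        le_of_lt (mem_ball.1 ((D.subset_ball k P hP) hxP).2)
      have hyd : dist y (D.center k P) ≤ 28 * D.radius k P :=
        le_of_lt (mem_ball.1 ((D.subset_ball k P hP) hyP).2)
      exact pointwise_bound hud hω hK' hCK' hf hrP hxd hyd
    · rw [grandMax, indicator_of_notMem hxQ] at hx
      exact absurd hx (by simp)
  have hsub : E ⊆ E1 ∪ E2 := by
    intro x hx
    obtain ⟨hxQ, hlt⟩ := hpt x hx
    by_contra hnot
    rw [mem_union] at hnot
    push_neg at hnot
    obtain ⟨h1, h2⟩ := hnot
    rw [hE1def, mem_setOf_eq, not_lt] at h1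
    rw [hE2def, mem_setOf_eq] at h2
    push_neg at h2
    have h2' : Mlam μ lam f x ≤ ENNReal.ofReal (t/(2*C1)) := h2 hxQ
    have hle : Tsharp μ K f x + ENNReal.ofReal C1 * Mlam μ lam f x ≤ ENNReal.ofReal t := by
      calc Tsharp μ K f x + ENNReal.ofReal C1 * Mlam μ lam f x ≤
          ENNReal.ofReal (t/2) + ENNReal.ofReal C1 * ENNReal.ofReal (t/(2*C1)) :=
            add_le_add h1 (mul_le_mul_right h2' _)
        _ = ENNReal.ofReal (t/2) + ENNReal.ofReal (C1 * (t/(2*C1))) := by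
            rw [ENNReal.ofReal_mul (le_of_lt hC1pos)]
        _ = ENNReal.ofReal (t/2) + ENNReal.ofReal (t/2) := by
            congr 2
            field_simp
        _ = ENNReal.ofReal t := by
            rw [← ENNReal.ofReal_add (by linarith) (by linarith)]
            congr 1
            ring
    exact absurd (lt_of_lt_of_le hlt hle) (lt_irrefl _)
  have hE1 : μ E1 ≤ ENNReal.ofReal (a/t) * ∫⁻ y, ‖f y‖₊ ∂μ := by
    refine (hweak f hf (t/2) (half_pos ht)).trans ?_
    apply mul_le_mul_left
    apply ENNReal.ofReal_le_ofReal
    have heq : CW/(t/2) = 2*CW/t := by field_simp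
    rw [heq, hadef]
    have h2 : 2*CW ≤ 2 * max CW 0 := by nlinarith [le_max_left CW (0:ℝ)]
    exact div_le_div_of_nonneg_right h2 ht.le
  have hE2 : μ E2 ≤ ENNReal.ofReal (b/t) * ∫⁻ y, ‖f y‖₊ ∂μ := by
    have hQball : Q₀ ⊆ ball z₀ (28 * r₀) := fun x hx => ((D.subset_ball k₀ Q₀ hQ₀) hx).2
    have hs' : 0 < t/(2*C1) := by positivity
    refine (mlam_weak hud hf hr₀ hsupp hQball hs').trans ?_
    apply mul_le_mul_left
    apply ENNReal.ofReal_le_ofReal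
    have heq : Cl^3/(t/(2*C1)) = 2*C1*Cl^3/t := by
      field_simp
    rw [heq, hbdef]
  calc μ E ≤ μ (E1 ∪ E2) := measure_mono hsub
    _ ≤ μ E1 + μ E2 := measure_union_le _ _
    _ ≤ ENNReal.ofReal (a/t) * (∫⁻ y, ‖f y‖₊ ∂μ) +
        ENNReal.ofReal (b/t) * ∫⁻ y, ‖f y‖₊ ∂μ := add_le_add hE1 hE2
    _ = ENNReal.ofReal ((a+b)/t) * ∫⁻ y, ‖f y‖₊ ∂μ := by
        rw [← add_mul, ← ENNReal.ofReal_add (by positivity) (by positivity), ← add_div]
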